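/- Let ν be the normalized Lebesgue (Haar) probability measure on the circle S¹ = ℝ/2πℤ, and let A : S¹ × S¹ → ℝ be Hölder continuous. Let λ > 0 and a strictly positive continuous ψ : S¹ → ℝ satisfy ∫ e^{A(x,y)} ψ(x) dν(x) = λ ψ(y) for all y, and set Ā(x,y) = A(x,y) + log ψ(x) − log ψ(y) − log λ, so that ∫ e^{Ā(x,y)} dν(x) = 1 for all y. Let m be the unique Borel probability measure on (S¹)^ℕ fixed by the dual Ruelle operator of the potential x ↦ Ā(x₀, x₁). Then for every r ∈ ℕ, every continuous f : (S¹)^{r+1} → ℝ, and every boundary condition σ' = (σ'₀, σ'₁, …) ∈ (S¹)^ℕ, the finite-volume DLR expectations converge: lim_{n→∞} ∫_{(S¹)^n} f(τ₀, …, τ_r) · exp( Σ_{k=0}^{n−2} Ā(τ_k, τ_{k+1}) + Ā(τ_{n−1}, σ'_n) ) dν(τ₀)⋯dν(τ_{n−1}) = ∫ f(x₀, …, x_r) dm(x). In particular the limit does not depend on the boundary condition σ'. -/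

import Mathlib

open MeasureTheory Filter Topology
open Fin.NatCast

noncomputable section

instance : Fact (0 < 2 * Real.pi) := ⟨by positivity⟩

/-- The circle `M = ℝ/2πℤ` with arc-length metric. -/
abbrev Circ : Type := AddCircle (2 * Real.pi)

/-- The normalized Haar (Lebesgue) probability measure on the circle. -/
def haarC : Measure Circ := AddCircle.haarAddCircle

/-- The Bernoulli space `𝓑 = M^ℕ`. -/
abbrev Bs : Type := ℕ → Circ

/-- The left shift `σ`. -/
def shift (x : Bs) : Bs := fun n => x (n + 1)

/-- Prepending a symbol: `cons a x = ax = (a, x₀, x₁, …)`. -/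
def cons (a : Circ) (x : Bs) : Bs := fun n =>
  match n with
  | 0 => a
  | k + 1 => x k

/-- The metric `d(x,y) = Σ_k 2^{-k} d_M(x_k, y_k)` on `𝓑`. -/
def dB (x y : Bs) : ℝ := ∑' k : ℕ, (1 / 2 : ℝ) ^ k * dist (x k) (y k)

/-- `A` is α-Hölder with constant `H` for the metric `dB`. -/
def IsHolderB (α H : ℝ) (A : Bs → ℝ) : Prop := ∀ x y, |A x - A y| ≤ H * dB x y ^ α

/-- The Ruelle operator `L_A ψ (x) = ∫_M e^{A(ax)} ψ(ax) da`. -/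
def Ruelle (A : Bs → ℝ) (ψ : Bs → ℝ) : Bs → ℝ :=
  fun x => ∫ a, Real.exp (A (cons a x)) * ψ (cons a x) ∂haarC

/-- `m` is a fixed point of the dual Ruelle operator `L_A^*`. -/
def FixedDual (A : Bs → ℝ) (m : Measure Bs) : Prop :=
  ∀ ψ : Bs → ℝ, Continuous ψ → (∃ C, ∀ x, |ψ x| ≤ C) →
    ∫ x, Ruelle A ψ x ∂m = ∫ x, ψ x ∂m

/-- The normalized two-coordinate potential `Ā(x,y) = A(x,y) + log ψ(x) − log ψ(y) − log λ`. -/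
def Abar2 (A : Circ → Circ → ℝ) (ψ : Circ → ℝ) (lam : ℝ) : Circ → Circ → ℝ :=
  fun x y => A x y + Real.log (ψ x) - Real.log (ψ y) - Real.log lam

instance : IsProbabilityMeasure haarC := by unfold haarC; infer_instance

lemma cont_integrable {X : Type*} [TopologicalSpace X] [CompactSpace X] [MeasurableSpace X]
    [OpensMeasurableSpace X] [T2Space X] {μ : Measure X} [IsFiniteMeasureOnCompacts μ]
    {g : X → ℝ} (hg : Continuous g) : Integrable g μ :=
  hg.integrable_of_hasCompactSupport
    (IsCompact.of_isClosed_subset isCompact_univ (isClosed_tsupport g) (Set.subset_univ _))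

lemma exists_max_cs {X : Type*} [TopologicalSpace X] [CompactSpace X] [Nonempty X]
    {f : X → ℝ} (hf : Continuous f) : ∃ x, ∀ y, f y ≤ f x := by
  obtain ⟨x, -, hx⟩ := isCompact_univ.exists_isMaxOn Set.univ_nonempty hf.continuousOn
  exact ⟨x, fun y => hx (Set.mem_univ y)⟩

lemma exists_min_cs {X : Type*} [TopologicalSpace X] [CompactSpace X] [Nonempty X]
    {f : X → ℝ} (hf : Continuous f) : ∃ x, ∀ y, f x ≤ f y := by
  obtain ⟨x, -, hx⟩ := isCompact_univ.exists_isMinOn Set.univ_nonempty hf.continuousOn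
  exact ⟨x, fun y => hx (Set.mem_univ y)⟩

section kernel
variable {k : Circ → Circ → ℝ} (hk : Continuous fun p : Circ × Circ => k p.1 p.2)
  {δ : ℝ} (hδ0 : 0 < δ) (hδ : ∀ x y, δ ≤ k x y) (hnorm : ∀ y, ∫ x, k x y ∂haarC = 1)
include hk hδ0 hδ hnorm

lemma doeblin_step (u : Circ → ℝ) (hu : Continuous u) (ml M : ℝ)
    (hml : ∀ x, ml ≤ u x) (hM : ∀ x, u x ≤ M) (b b' : Circ) :
    |(∫ x, k x b * u x ∂haarC) - ∫ x, k x b' * u x ∂haarC| ≤ (1 - δ) * (M - ml) := by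
  have hkb : Continuous fun x => k x b := hk.comp (continuous_id.prodMk continuous_const)
  have hkb' : Continuous fun x => k x b' := hk.comp (continuous_id.prodMk continuous_const)
  set c := (M + ml) / 2 with hc
  have key : (∫ x, k x b * u x ∂haarC) - (∫ x, k x b' * u x ∂haarC)
      = ∫ x, (k x b - k x b') * (u x - c) ∂haarC := by
    have h1 : Integrable (fun x => k x b * u x) haarC := cont_integrable (hkb.mul hu)
    have h2 : Integrable (fun x => k x b' * u x) haarC := cont_integrable (hkb'.mul hu)
    have h3 : Integrable (fun x => k x b * c) haarC := cont_integrable (hkb.mul continuous_const)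
    have h4 : Integrable (fun x => k x b' * c) haarC := cont_integrable (hkb'.mul continuous_const)
    have e1 : ∫ x, k x b * c ∂haarC = c := by
      rw [MeasureTheory.integral_mul_const, hnorm b, one_mul]
    have e2 : ∫ x, k x b' * c ∂haarC = c := by
      rw [MeasureTheory.integral_mul_const, hnorm b', one_mul]
    have hfun : (fun x => (k x b - k x b') * (u x - c))
        = fun x => (k x b * u x - k x b * c) - (k x b' * u x - k x b' * c) := by
      funext x; ring
    have I1 : Integrable (fun x => k x b * u x - k x b * c) haarC :=
      cont_integrable ((hkb.mul hu).sub (hkb.mul continuous_const))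
    have I2 : Integrable (fun x => k x b' * u x - k x b' * c) haarC :=
      cont_integrable ((hkb'.mul hu).sub (hkb'.mul continuous_const))
    rw [hfun, integral_sub I1 I2, integral_sub h1 h3, integral_sub h2 h4, e1, e2]
    ring
  rw [key]
  have hMm : 0 ≤ M - ml := by
    have := (hml 0).trans (hM 0); linarith
  calc |∫ x, (k x b - k x b') * (u x - c) ∂haarC|
      ≤ ∫ x, |k x b - k x b'| * |u x - c| ∂haarC := by
        simpa [Real.norm_eq_abs, abs_mul] using norm_integral_le_integral_norm (μ := haarC)
          (fun x => (k x b - k x b') * (u x - c))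
    _ ≤ ∫ x, ((k x b - δ) + (k x b' - δ)) * ((M - ml) / 2) ∂haarC := by
        apply integral_mono (cont_integrable (((hkb.sub hkb').abs).mul (hu.sub continuous_const).abs))
          (cont_integrable ((((hkb.sub continuous_const).add (hkb'.sub continuous_const))).mul
            continuous_const))
        intro x
        simp only [Pi.sub_apply, Pi.add_apply, Pi.mul_apply]
        apply mul_le_mul
        · rw [abs_sub_le_iff]
          exact ⟨by linarith [hδ x b'], by linarith [hδ x b]⟩
        · rw [abs_le]; constructor <;> [skip; skip] <;> simp [hc] <;> nlinarith [hml x, hM x]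
        · positivity
        · nlinarith [hδ x b, hδ x b', hδ0]
    _ = (1 - δ) * (M - ml) := by
        rw [MeasureTheory.integral_mul_const]
        have : ∫ x, ((k x b - δ) + (k x b' - δ)) ∂haarC = 2 - 2*δ := by
          have Ia : Integrable (fun x => k x b - δ) haarC :=
            cont_integrable (hkb.sub continuous_const)
          have Ib : Integrable (fun x => k x b' - δ) haarC :=
            cont_integrable (hkb'.sub continuous_const)
          rw [integral_add Ia Ib, integral_sub (cont_integrable hkb) (integrable_const δ),
            integral_sub (cont_integrable hkb') (integrable_const δ), hnorm, hnorm]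
          simp [measure_univ]
          ring
        rw [this]; ring
end kernel
def Tk (k : Circ → Circ → ℝ) (u : Circ → ℝ) : Circ → ℝ := fun b => ∫ x, k x b * u x ∂haarC

section kernel2
variable {k : Circ → Circ → ℝ} (hk : Continuous fun p : Circ × Circ => k p.1 p.2)
  {δ : ℝ} (hδ0 : 0 < δ) (hδ : ∀ x y, δ ≤ k x y) (hnorm : ∀ y, ∫ x, k x y ∂haarC = 1)
include hk hδ0 hδ hnorm

omit hδ0 hδ in
lemma Tk_continuous (u : Circ → ℝ) (hu : Continuous u) : Continuous (Tk k u) := by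
  obtain ⟨p0, hp0⟩ := exists_max_cs (hk.abs)
  obtain ⟨x0, hx0⟩ := exists_max_cs (hu.abs)
  apply continuous_of_dominated (bound := fun _ => |k p0.1 p0.2| * |u x0|)
  · intro b
    exact (((hk.comp (continuous_id.prodMk continuous_const)).mul hu)).aestronglyMeasurable
  · intro b
    filter_upwards with x
    have h1 := hp0 (x, b)
    have h2 := hx0 x
    rw [Real.norm_eq_abs, abs_mul]
    exact mul_le_mul h1 h2 (abs_nonneg _) (abs_nonneg _)
  · exact integrable_const _
  · filter_upwards with x
    exact (hk.comp (continuous_const.prodMk continuous_id)).mul continuous_const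

omit hδ0 in
lemma Tk_bounds (u : Circ → ℝ) (hu : Continuous u) (ml M : ℝ)
    (hml : ∀ x, ml ≤ u x) (hM : ∀ x, u x ≤ M) (hd0 : 0 ≤ δ) :
    ∀ b, ml ≤ Tk k u b ∧ Tk k u b ≤ M := by
  intro b
  have hkb : Continuous fun x => k x b := hk.comp (continuous_id.prodMk continuous_const)
  have hknn : ∀ x, 0 ≤ k x b := fun x => hd0.trans (hδ x b)
  have e : ∫ x, k x b * ml ∂haarC = ml := by
    rw [MeasureTheory.integral_mul_const, hnorm b, one_mul]
  have e' : ∫ x, k x b * M ∂haarC = M := by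
    rw [MeasureTheory.integral_mul_const, hnorm b, one_mul]
  constructor
  · rw [← e]
    apply integral_mono (cont_integrable (hkb.mul continuous_const))
      (cont_integrable (hkb.mul hu))
    exact fun x => mul_le_mul_of_nonneg_left (hml x) (hknn x)
  · rw [show (M : ℝ) = ∫ x, k x b * M ∂haarC from e'.symm]
    apply integral_mono (cont_integrable (hkb.mul hu))
      (cont_integrable (hkb.mul continuous_const))
    exact fun x => mul_le_mul_of_nonneg_left (hM x) (hknn x)

lemma delta_le_one : δ ≤ 1 := by
  have := hnorm 0
  calc δ = ∫ _ : Circ, δ ∂haarC := by simp [measure_univ]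
  _ ≤ ∫ x, k x 0 ∂haarC := integral_mono (integrable_const _)
      (cont_integrable (hk.comp (continuous_id.prodMk continuous_const))) (fun x => hδ x 0)
  _ = 1 := hnorm 0

lemma Tk_iterate (u : Circ → ℝ) (hu : Continuous u) (ml M : ℝ)
    (hml : ∀ x, ml ≤ u x) (hM : ∀ x, u x ≤ M) :
    ∀ n, Continuous ((Tk k)^[n] u) ∧ (∀ b, ml ≤ (Tk k)^[n] u b ∧ (Tk k)^[n] u b ≤ M) ∧
      ∃ mn Mn, (∀ b, mn ≤ (Tk k)^[n] u b ∧ (Tk k)^[n] u b ≤ Mn) ∧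
        Mn - mn ≤ (1 - δ) ^ n * (M - ml) := by
  intro n
  induction n with
  | zero =>
    refine ⟨hu, fun b => ⟨hml b, hM b⟩, ml, M, fun b => ⟨hml b, hM b⟩, by simp⟩
  | succ n ih =>
    obtain ⟨hcont, hbdd, mn, Mn, hbd2, hosc⟩ := ih
    rw [Function.iterate_succ_apply']
    have hcont' : Continuous (Tk k ((Tk k)^[n] u)) := Tk_continuous hk hnorm _ hcont
    obtain ⟨bmin, hbmin⟩ := exists_min_cs hcont'
    obtain ⟨bmax, hbmax⟩ := exists_max_cs hcont'
    have hminmax : ∀ b, Tk k ((Tk k)^[n] u) bmin ≤ Tk k ((Tk k)^[n] u) b ∧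
        Tk k ((Tk k)^[n] u) b ≤ Tk k ((Tk k)^[n] u) bmax := fun b => ⟨hbmin b, hbmax b⟩
    refine ⟨hcont', ?_, Tk k ((Tk k)^[n] u) bmin, Tk k ((Tk k)^[n] u) bmax, hminmax, ?_⟩
    · exact Tk_bounds hk hδ hnorm _ hcont ml M (fun b => (hbdd b).1) (fun b => (hbdd b).2) hδ0.le
    · have step : |Tk k ((Tk k)^[n] u) bmax - Tk k ((Tk k)^[n] u) bmin| ≤ (1 - δ) * (Mn - mn) :=
        doeblin_step hk hδ0 hδ hnorm _ hcont mn Mn (fun b => (hbd2 b).1) (fun b => (hbd2 b).2)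
          bmax bmin
      have h1δ : 0 ≤ 1 - δ := by linarith [delta_le_one hk hδ0 hδ hnorm]
      calc Tk k ((Tk k)^[n] u) bmax - Tk k ((Tk k)^[n] u) bmin
          ≤ (1 - δ) * (Mn - mn) := (le_abs_self _).trans step
        _ ≤ (1 - δ) * ((1 - δ) ^ n * (M - ml)) := by
            apply mul_le_mul_of_nonneg_left hosc h1δ
        _ = (1 - δ) ^ (n + 1) * (M - ml) := by ring
end kernel2
lemma fin_natCast_mk {M k : ℕ} [NeZero M] (h : k < M) : ((k : ℕ) : Fin M) = ⟨k, h⟩ := by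
  ext
  simp [Fin.val_natCast, Nat.mod_eq_of_lt h]

lemma fin_natCast_castSucc {N k : ℕ} [NeZero N] (h : k < N) :
    ((k : ℕ) : Fin (N + 1)) = Fin.castSucc ((k : ℕ) : Fin N) := by
  ext
  simp [Fin.val_natCast, Nat.mod_eq_of_lt h, Nat.mod_eq_of_lt (h.trans (Nat.lt_succ_self N))]

lemma fin_natCast_last (N : ℕ) : ((N : ℕ) : Fin (N + 1)) = Fin.last N := by
  ext
  simp [Fin.val_natCast, Nat.mod_eq_of_lt (Nat.lt_succ_self N)]

def csnoc {N : ℕ} (σ : Fin N → Circ) (a : Circ) : Fin (N + 1) → Circ := Fin.snoc σ a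

lemma csnoc_castSucc {N : ℕ} (σ : Fin N → Circ) (a : Circ) (i : Fin N) :
    csnoc σ a (Fin.castSucc i) = σ i := Fin.snoc_castSucc ..

lemma csnoc_last {N : ℕ} (σ : Fin N → Circ) (a : Circ) : csnoc σ a (Fin.last N) = a :=
  Fin.snoc_last ..

lemma continuous_snoc (N : ℕ) :
    Continuous (fun p : Circ × (Fin N → Circ) => csnoc p.2 p.1) := by
  refine continuous_pi fun j => ?_
  induction j using Fin.lastCases with
  | last => simp only [csnoc_last]; exact continuous_fst
  | cast j =>
    simp only [csnoc_castSucc]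
    exact (continuous_apply j).comp continuous_snd

lemma integral_pi_split_last {N : ℕ} (φ : (Fin (N + 1) → Circ) → ℝ) (hφ : Continuous φ) :
    ∫ τ : Fin (N + 1) → Circ, φ τ ∂(Measure.pi fun _ => haarC)
      = ∫ a : Circ, (∫ σ : Fin N → Circ, φ (csnoc σ a) ∂(Measure.pi fun _ => haarC)) ∂haarC := by
  have hmp := measurePreserving_piFinSuccAbove (fun _ : Fin (N + 1) => haarC) (Fin.last N)
  set e := MeasurableEquiv.piFinSuccAbove (fun _ : Fin (N + 1) => Circ) (Fin.last N) with he
  have hcomp := hmp.integral_comp e.measurableEmbedding (fun p => φ (csnoc p.2 p.1))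
  have hsymm : ∀ τ : Fin (N + 1) → Circ, φ (csnoc (e τ).2 (e τ).1) = φ τ := by
    intro τ
    congr 1
    have : e τ = (τ (Fin.last N), fun j => τ ((Fin.last N).succAbove j)) := rfl
    rw [this]
    funext j
    induction j using Fin.lastCases with
    | last => rw [csnoc_last]
    | cast j =>
      rw [csnoc_castSucc]
      show τ ((Fin.last N).succAbove j) = τ j.castSucc
      rw [Fin.succAbove_last_apply]
  have hint : Integrable (fun p : Circ × (Fin N → Circ) => φ (csnoc p.2 p.1))
      (haarC.prod (Measure.pi fun _ => haarC)) :=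
    cont_integrable (hφ.comp (continuous_snoc N))
  calc ∫ τ : Fin (N + 1) → Circ, φ τ ∂(Measure.pi fun _ => haarC)
      = ∫ τ : Fin (N + 1) → Circ, φ (csnoc (e τ).2 (e τ).1) ∂(Measure.pi fun _ => haarC) := by
        simp_rw [hsymm]
    _ = ∫ p : Circ × (Fin N → Circ), φ (csnoc p.2 p.1)
          ∂(haarC.prod (Measure.pi fun _ => haarC)) := hcomp
    _ = ∫ a : Circ, (∫ σ : Fin N → Circ, φ (csnoc σ a) ∂(Measure.pi fun _ => haarC)) ∂haarC :=
        integral_prod _ hint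

lemma csnoc_cast_lt {N : ℕ} [NeZero N] (σ : Fin N → Circ) (a : Circ) {k : ℕ} (h : k < N) :
    csnoc σ a ((k : ℕ) : Fin (N + 1)) = σ ((k : ℕ) : Fin N) := by
  rw [fin_natCast_castSucc h, csnoc_castSucc]

lemma csnoc_cast_last {N : ℕ} (σ : Fin N → Circ) (a : Circ) :
    csnoc σ a ((N : ℕ) : Fin (N + 1)) = a := by
  rw [fin_natCast_last, csnoc_last]

section main
variable (r : ℕ) (W : Circ → Circ → ℝ) (f : (Fin (r + 1) → Circ) → ℝ)

def FFint (N : ℕ) (b : Circ) (τ : Fin (N + 1) → Circ) : ℝ :=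
  f (fun i => τ ((i : ℕ) : Fin (N + 1))) *
    Real.exp ((∑ k ∈ Finset.range N,
      W (τ ((k : ℕ) : Fin (N + 1))) (τ ((k + 1 : ℕ) : Fin (N + 1))))
      + W (τ ((N : ℕ) : Fin (N + 1))) b)

def FF (n : ℕ) (b : Circ) : ℝ :=
  ∫ τ : Fin (r + n + 1) → Circ, FFint r W f (r + n) b τ ∂(Measure.pi fun _ => haarC)

def mixc (j : ℕ) (τ : Fin (j + 1) → Circ) (x : Bs) : Fin (r + 1) → Circ :=
  fun i => if h : (i : ℕ) < j + 1 then τ ⟨i, h⟩ else x ((i : ℕ) - (j + 1))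

def HHint (j : ℕ) (x : Bs) (τ : Fin (j + 1) → Circ) : ℝ :=
  f (mixc r j τ x) *
    Real.exp ((∑ k ∈ Finset.range j,
      W (τ ((k : ℕ) : Fin (j + 1))) (τ ((k + 1 : ℕ) : Fin (j + 1))))
      + W (τ ((j : ℕ) : Fin (j + 1))) (x 0))

def HH (j : ℕ) (x : Bs) : ℝ :=
  ∫ τ : Fin (j + 1) → Circ, HHint r W f j x τ ∂(Measure.pi fun _ => haarC)

variable {r W f}
variable (hW : Continuous fun p : Circ × Circ => W p.1 p.2) (hf : Continuous f)

include hW hf in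
lemma FFint_continuous (N : ℕ) (b : Circ) : Continuous (FFint r W f N b) := by
  apply Continuous.mul
  · exact hf.comp (continuous_pi fun i => continuous_apply (((i : ℕ) : Fin (N + 1))))
  · refine Real.continuous_exp.comp (Continuous.add ?_ ?_)
    · refine continuous_finset_sum _ fun k _ => ?_
      exact hW.comp (Continuous.prodMk (continuous_apply (((k : ℕ) : Fin (N + 1))))
        (continuous_apply (((k + 1 : ℕ) : Fin (N + 1)))))
    · exact hW.comp (Continuous.prodMk (continuous_apply (((N : ℕ) : Fin (N + 1))))
        continuous_const)

include hW hf in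
lemma HHint_continuous (j : ℕ) (x : Bs) : Continuous (fun τ => HHint r W f j x τ) := by
  apply Continuous.mul
  · refine hf.comp (continuous_pi fun i => ?_)
    unfold mixc
    by_cases h : (i : ℕ) < j + 1
    · simp only [dif_pos h]; exact continuous_apply _
    · simp only [dif_neg h]; exact continuous_const
  · refine Real.continuous_exp.comp (Continuous.add ?_ ?_)
    · refine continuous_finset_sum _ fun k _ => ?_
      exact hW.comp (Continuous.prodMk (continuous_apply (((k : ℕ) : Fin (j + 1))))
        (continuous_apply (((k + 1 : ℕ) : Fin (j + 1)))))
    · exact hW.comp (Continuous.prodMk (continuous_apply (((j : ℕ) : Fin (j + 1))))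
        continuous_const)

lemma FFint_snoc (N : ℕ) (hrN : r ≤ N) (a b : Circ) (σ : Fin (N + 1) → Circ) :
    FFint r W f (N + 1) b (csnoc σ a) = FFint r W f N a σ * Real.exp (W a b) := by
  unfold FFint
  have harg : (fun i : Fin (r + 1) => csnoc σ a ((i : ℕ) : Fin (N + 1 + 1)))
      = fun i : Fin (r + 1) => σ ((i : ℕ) : Fin (N + 1)) := by
    funext i
    exact csnoc_cast_lt σ a (by omega)
  have hsum : ∑ k ∈ Finset.range (N + 1),
      W (csnoc σ a ((k : ℕ) : Fin (N + 1 + 1))) (csnoc σ a ((k + 1 : ℕ) : Fin (N + 1 + 1)))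
      = (∑ k ∈ Finset.range N,
          W (σ ((k : ℕ) : Fin (N + 1))) (σ ((k + 1 : ℕ) : Fin (N + 1))))
        + W (σ ((N : ℕ) : Fin (N + 1))) a := by
    rw [Finset.sum_range_succ]
    congr 1
    · refine Finset.sum_congr rfl fun k hk => ?_
      have hk' : k < N := Finset.mem_range.mp hk
      rw [csnoc_cast_lt σ a (by omega : k < N + 1),
        csnoc_cast_lt σ a (by omega : k + 1 < N + 1)]
    · rw [csnoc_cast_lt σ a (by omega : N < N + 1), csnoc_cast_last σ a]
  rw [harg, hsum, csnoc_cast_last σ a, Real.exp_add]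
  ring

include hW hf in
lemma FF_succ (n : ℕ) (b : Circ) :
    FF r W f (n + 1) b = ∫ a, Real.exp (W a b) * FF r W f n a ∂haarC := by
  have h0 : FF r W f (n + 1) b
      = ∫ τ : Fin ((r + n + 1) + 1) → Circ, FFint r W f ((r + n) + 1) b τ
          ∂(Measure.pi fun _ => haarC) := rfl
  rw [h0, integral_pi_split_last _ (FFint_continuous hW hf _ b)]
  refine integral_congr_ae (Filter.Eventually.of_forall fun a => ?_)
  have hpt : ∀ σ : Fin (r + n + 1) → Circ,
      FFint r W f ((r + n) + 1) b (csnoc σ a) = FFint r W f (r + n) a σ * Real.exp (W a b) :=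
    fun σ => FFint_snoc _ (by omega) a b σ
  simp only [hpt]
  rw [MeasureTheory.integral_mul_const]
  exact mul_comm _ _

lemma mixc_snoc (j : ℕ) (τ : Fin (j + 1) → Circ) (a : Circ) (x : Bs) :
    mixc r (j + 1) (csnoc τ a) x = mixc r j τ (cons a x) := by
  funext i
  unfold mixc
  by_cases h1 : (i : ℕ) < j + 1
  · rw [dif_pos (show (i : ℕ) < j + 1 + 1 by omega), dif_pos h1]
    have hmk : (⟨(i : ℕ), show (i : ℕ) < j + 1 + 1 by omega⟩ : Fin (j + 1 + 1))
        = Fin.castSucc ⟨(i : ℕ), h1⟩ := rfl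
    rw [hmk, csnoc_castSucc]
  · by_cases h2 : (i : ℕ) < j + 1 + 1
    · rw [dif_pos h2, dif_neg h1]
      have hmk : (⟨(i : ℕ), h2⟩ : Fin (j + 1 + 1)) = Fin.last (j + 1) := by
        ext
        simp only [Fin.val_last]
        omega
      rw [hmk, csnoc_last, show (i : ℕ) - (j + 1) = 0 from by omega]
      rfl
    · rw [dif_neg h2, dif_neg h1,
        show (i : ℕ) - (j + 1) = ((i : ℕ) - (j + 1 + 1)) + 1 from by omega]
      rfl

lemma HHint_snoc (j : ℕ) (x : Bs) (a : Circ) (τ : Fin (j + 1) → Circ) :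
    HHint r W f (j + 1) x (csnoc τ a) = HHint r W f j (cons a x) τ * Real.exp (W a (x 0)) := by
  unfold HHint
  have hmix := mixc_snoc (r := r) j τ a x
  have hsum : ∑ k ∈ Finset.range (j + 1),
      W (csnoc τ a ((k : ℕ) : Fin (j + 1 + 1))) (csnoc τ a ((k + 1 : ℕ) : Fin (j + 1 + 1)))
      = (∑ k ∈ Finset.range j,
          W (τ ((k : ℕ) : Fin (j + 1))) (τ ((k + 1 : ℕ) : Fin (j + 1))))
        + W (τ ((j : ℕ) : Fin (j + 1))) a := by
    rw [Finset.sum_range_succ]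
    congr 1
    · refine Finset.sum_congr rfl fun k hk => ?_
      have hk' : k < j := Finset.mem_range.mp hk
      rw [csnoc_cast_lt τ a (by omega : k < j + 1),
        csnoc_cast_lt τ a (by omega : k + 1 < j + 1)]
    · rw [csnoc_cast_lt τ a (by omega : j < j + 1), csnoc_cast_last τ a]
  rw [hmix, hsum, csnoc_cast_last τ a]
  have hcons0 : cons a x 0 = a := rfl
  rw [hcons0, Real.exp_add]
  ring

include hW hf in
lemma Ruelle_HH (j : ℕ) (x : Bs) :
    Ruelle (fun y : Bs => W (y 0) (y 1)) (HH r W f j) x = HH r W f (j + 1) x := by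
  have hR : Ruelle (fun y : Bs => W (y 0) (y 1)) (HH r W f j) x
      = ∫ a, Real.exp (W a (x 0)) * HH r W f j (cons a x) ∂haarC := rfl
  have h0 : HH r W f (j + 1) x
      = ∫ τ : Fin ((j + 1) + 1) → Circ, HHint r W f (j + 1) x τ
          ∂(Measure.pi fun _ => haarC) := rfl
  rw [hR, h0, integral_pi_split_last _ (HHint_continuous hW hf _ x)]
  refine (integral_congr_ae (Filter.Eventually.of_forall fun a => ?_)).symm
  have hpt : ∀ τ : Fin (j + 1) → Circ,
      HHint r W f (j + 1) x (csnoc τ a)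
        = HHint r W f j (cons a x) τ * Real.exp (W a (x 0)) :=
    fun τ => HHint_snoc j x a τ
  simp only [hpt]
  rw [MeasureTheory.integral_mul_const]
  exact mul_comm _ _

include hW hf in
lemma Ruelle_g (x : Bs) :
    Ruelle (fun y : Bs => W (y 0) (y 1)) (fun y : Bs => f (fun i => y (i : ℕ))) x
      = HH r W f 0 x := by
  have hR : Ruelle (fun y : Bs => W (y 0) (y 1)) (fun y : Bs => f (fun i => y (i : ℕ))) x
      = ∫ a, Real.exp (W a (x 0)) * f (fun i => cons a x (i : ℕ)) ∂haarC := rfl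
  have hmp := (measurePreserving_funUnique haarC (Fin 1)).integral_comp
    (MeasurableEquiv.funUnique (Fin 1) Circ).measurableEmbedding
    (fun c => HHint r W f 0 x (fun _ => c))
  have h1 : ∀ τ : Fin 1 → Circ,
      HHint r W f 0 x (fun _ => (MeasurableEquiv.funUnique (Fin 1) Circ) τ)
        = HHint r W f 0 x τ := by
    intro τ
    congr 1
    funext i
    show τ default = τ i
    congr 1
    apply Fin.ext
    have hd : ((default : Fin 1) : ℕ) = 0 := rfl
    have hlt := i.isLt
    rw [hd]
    omega
  have h2 : HH r W f 0 x = ∫ c, HHint r W f 0 x (fun _ => c) ∂haarC := by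
    rw [← hmp]
    exact integral_congr_ae (Filter.Eventually.of_forall fun τ => (h1 τ).symm)
  rw [hR, h2]
  refine integral_congr_ae (Filter.Eventually.of_forall fun a => ?_)
  have hmix : (fun i : Fin (r + 1) => cons a x (i : ℕ)) = mixc r 0 (fun _ => a) x := by
    funext i
    unfold mixc
    by_cases h : (i : ℕ) < 0 + 1
    · rw [dif_pos h]
      show cons a x (i : ℕ) = a
      rw [show ((i : ℕ)) = 0 from by omega]
      rfl
    · rw [dif_neg h]
      show cons a x (i : ℕ) = x ((i : ℕ) - (0 + 1))
      rw [show ((i : ℕ)) = ((i : ℕ) - (0 + 1)) + 1 from by omega]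
      rfl
  unfold HHint
  dsimp only
  rw [← hmix]
  simp only [Finset.range_zero, Finset.sum_empty, zero_add]
  ring
end main

section bounds
variable {r : ℕ} {W : Circ → Circ → ℝ} {f : (Fin (r + 1) → Circ) → ℝ}
variable (hW : Continuous fun p : Circ × Circ => W p.1 p.2) (hf : Continuous f)
variable {Cf CW : ℝ} (hCf : ∀ y, |f y| ≤ Cf) (hCW : ∀ x y, |W x y| ≤ CW)

include hCf hCW in
lemma FFint_bound (N : ℕ) (b : Circ) (τ : Fin (N + 1) → Circ) :
    |FFint r W f N b τ| ≤ Cf * Real.exp (((N : ℝ) + 1) * CW) := by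
  unfold FFint
  rw [abs_mul, Real.abs_exp]
  have h0Cf : 0 ≤ Cf := le_trans (abs_nonneg _) (hCf fun _ => 0)
  refine mul_le_mul (hCf _) ?_ (Real.exp_pos _).le h0Cf
  rw [Real.exp_le_exp]
  have hsum : (∑ k ∈ Finset.range N,
      W (τ ((k : ℕ) : Fin (N + 1))) (τ ((k + 1 : ℕ) : Fin (N + 1)))) ≤ (N : ℝ) * CW := by
    calc (∑ k ∈ Finset.range N, W (τ ((k : ℕ) : Fin (N + 1))) (τ ((k + 1 : ℕ) : Fin (N + 1))))
        ≤ ∑ _k ∈ Finset.range N, CW :=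
          Finset.sum_le_sum fun k _ => (le_abs_self _).trans (hCW _ _)
      _ = (N : ℝ) * CW := by
          rw [Finset.sum_const, Finset.card_range, nsmul_eq_mul]
  have hb : W (τ ((N : ℕ) : Fin (N + 1))) b ≤ CW := (le_abs_self _).trans (hCW _ _)
  nlinarith [hsum, hb]

include hCf hCW in
lemma HHint_bound (j : ℕ) (x : Bs) (τ : Fin (j + 1) → Circ) :
    |HHint r W f j x τ| ≤ Cf * Real.exp (((j : ℝ) + 1) * CW) := by
  unfold HHint
  rw [abs_mul, Real.abs_exp]
  have h0Cf : 0 ≤ Cf := le_trans (abs_nonneg _) (hCf fun _ => 0)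
  refine mul_le_mul (hCf _) ?_ (Real.exp_pos _).le h0Cf
  rw [Real.exp_le_exp]
  have hsum : (∑ k ∈ Finset.range j,
      W (τ ((k : ℕ) : Fin (j + 1))) (τ ((k + 1 : ℕ) : Fin (j + 1)))) ≤ (j : ℝ) * CW := by
    calc (∑ k ∈ Finset.range j, W (τ ((k : ℕ) : Fin (j + 1))) (τ ((k + 1 : ℕ) : Fin (j + 1))))
        ≤ ∑ _k ∈ Finset.range j, CW :=
          Finset.sum_le_sum fun k _ => (le_abs_self _).trans (hCW _ _)
      _ = (j : ℝ) * CW := by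
          rw [Finset.sum_const, Finset.card_range, nsmul_eq_mul]
  have hb : W (τ ((j : ℕ) : Fin (j + 1))) (x 0) ≤ CW := (le_abs_self _).trans (hCW _ _)
  nlinarith [hsum, hb]

include hW hf hCf hCW in
lemma HH_bound (j : ℕ) (x : Bs) : |HH r W f j x| ≤ Cf * Real.exp (((j : ℝ) + 1) * CW) := by
  have h1 : |HH r W f j x| ≤ ∫ τ : Fin (j + 1) → Circ, |HHint r W f j x τ|
      ∂(Measure.pi fun _ => haarC) := by
    simpa [Real.norm_eq_abs, HH] using norm_integral_le_integral_norm
      (μ := (Measure.pi fun _ : Fin (j + 1) => haarC)) (HHint r W f j x)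
  refine h1.trans ?_
  calc (∫ τ : Fin (j + 1) → Circ, |HHint r W f j x τ| ∂(Measure.pi fun _ => haarC))
      ≤ ∫ _τ : Fin (j + 1) → Circ, Cf * Real.exp (((j : ℝ) + 1) * CW)
          ∂(Measure.pi fun _ => haarC) :=
        integral_mono (cont_integrable (HHint_continuous hW hf j x).abs) (integrable_const _)
          fun τ => HHint_bound hCf hCW j x τ
    _ = Cf * Real.exp (((j : ℝ) + 1) * CW) := by simp [measure_univ]

include hW hf hCf hCW in
lemma HHint_cont_x (j : ℕ) (τ : Fin (j + 1) → Circ) :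
    Continuous fun x : Bs => HHint r W f j x τ := by
  apply Continuous.mul
  · refine hf.comp (continuous_pi fun i => ?_)
    unfold mixc
    by_cases h : (i : ℕ) < j + 1
    · simp only [dif_pos h]; exact continuous_const
    · simp only [dif_neg h]; exact continuous_apply _
  · refine Real.continuous_exp.comp (Continuous.add continuous_const ?_)
    exact hW.comp (Continuous.prodMk continuous_const (continuous_apply 0))

include hW hf hCf hCW in
lemma HH_continuous (j : ℕ) : Continuous (HH r W f j) := by
  apply continuous_of_dominated (bound := fun _ => Cf * Real.exp (((j : ℝ) + 1) * CW))
  · exact fun x => (HHint_continuous hW hf j x).aestronglyMeasurable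
  · intro x
    filter_upwards with τ
    simpa [Real.norm_eq_abs] using HHint_bound hCf hCW j x τ
  · exact integrable_const _
  · filter_upwards with τ
    exact HHint_cont_x hW hf hCf hCW j τ

include hW hf hCf hCW in
lemma FF_zero_continuous : Continuous (FF r W f 0) := by
  apply continuous_of_dominated (bound := fun _ => Cf * Real.exp ((((r + 0 : ℕ) : ℝ) + 1) * CW))
  · exact fun b => (FFint_continuous hW hf (r + 0) b).aestronglyMeasurable
  · intro b
    filter_upwards with τ
    simpa [Real.norm_eq_abs] using FFint_bound hCf hCW (r + 0) b τ
  · exact integrable_const _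
  · filter_upwards with τ
    apply Continuous.mul continuous_const
    refine Real.continuous_exp.comp (Continuous.add continuous_const ?_)
    exact hW.comp (Continuous.prodMk continuous_const continuous_id)

lemma FF_bridge (n : ℕ) (b : Circ) :
    (∫ τ : Fin (n + r + 1) → Circ,
      f (fun i => τ ((i : ℕ) : Fin (n + r + 1))) *
        Real.exp ((∑ k ∈ Finset.range (n + r),
          W (τ ((k : ℕ) : Fin (n + r + 1))) (τ ((k + 1 : ℕ) : Fin (n + r + 1))))
          + W (τ (((n + r : ℕ)) : Fin (n + r + 1))) b)
      ∂(Measure.pi fun _ => haarC)) = FF r W f n b := by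
  have heq : r + n + 1 = n + r + 1 := by omega
  have hmp := (measurePreserving_piCongrLeft (fun _ : Fin (n + r + 1) => haarC)
      (finCongr heq)).integral_comp
    (MeasurableEquiv.piCongrLeft (fun _ => Circ) (finCongr heq)).measurableEmbedding
    (fun τ : Fin (n + r + 1) → Circ =>
      f (fun i => τ ((i : ℕ) : Fin (n + r + 1))) *
        Real.exp ((∑ k ∈ Finset.range (n + r),
          W (τ ((k : ℕ) : Fin (n + r + 1))) (τ ((k + 1 : ℕ) : Fin (n + r + 1))))
          + W (τ (((n + r : ℕ)) : Fin (n + r + 1))) b))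
  rw [← hmp]
  refine integral_congr_ae (Filter.Eventually.of_forall fun τ => ?_)
  have happ : ∀ k : ℕ, k < n + r + 1 →
      (MeasurableEquiv.piCongrLeft (fun _ => Circ) (finCongr heq)) τ ((k : ℕ) : Fin (n + r + 1))
        = τ ((k : ℕ) : Fin (r + n + 1)) := by
    intro k hk
    have hidx : ((k : ℕ) : Fin (n + r + 1)) = (finCongr heq) ((k : ℕ) : Fin (r + n + 1)) := by
      apply Fin.ext
      rw [Fin.val_natCast, Nat.mod_eq_of_lt hk, finCongr_apply, Fin.coe_cast, Fin.val_natCast,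
        Nat.mod_eq_of_lt (by omega)]
    rw [hidx, MeasurableEquiv.piCongrLeft_apply_apply]
  have h1 : (fun i : Fin (r + 1) =>
      (MeasurableEquiv.piCongrLeft (fun _ => Circ) (finCongr heq)) τ ((i : ℕ) : Fin (n + r + 1)))
      = fun i : Fin (r + 1) => τ ((i : ℕ) : Fin (r + n + 1)) :=
    funext fun i => happ (i : ℕ) (by omega)
  have h2 : (∑ k ∈ Finset.range (n + r),
      W ((MeasurableEquiv.piCongrLeft (fun _ => Circ) (finCongr heq)) τ ((k : ℕ) : Fin (n + r + 1)))
        ((MeasurableEquiv.piCongrLeft (fun _ => Circ) (finCongr heq)) τ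
          ((k + 1 : ℕ) : Fin (n + r + 1))))
      = ∑ k ∈ Finset.range (r + n),
          W (τ ((k : ℕ) : Fin (r + n + 1))) (τ ((k + 1 : ℕ) : Fin (r + n + 1))) := by
    have step1 : (∑ k ∈ Finset.range (n + r),
        W ((MeasurableEquiv.piCongrLeft (fun _ => Circ) (finCongr heq)) τ
            ((k : ℕ) : Fin (n + r + 1)))
          ((MeasurableEquiv.piCongrLeft (fun _ => Circ) (finCongr heq)) τ
            ((k + 1 : ℕ) : Fin (n + r + 1))))
        = ∑ k ∈ Finset.range (n + r),
            W (τ ((k : ℕ) : Fin (r + n + 1))) (τ ((k + 1 : ℕ) : Fin (r + n + 1))) := by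
      refine Finset.sum_congr rfl fun k hk => ?_
      have hk' := Finset.mem_range.mp hk
      rw [happ k (by omega), happ (k + 1) (by omega)]
    rw [step1, show n + r = r + n from Nat.add_comm n r]
  have h3 : (MeasurableEquiv.piCongrLeft (fun _ => Circ) (finCongr heq)) τ
      (((n + r : ℕ)) : Fin (n + r + 1)) = τ (((r + n : ℕ)) : Fin (r + n + 1)) := by
    rw [happ (n + r) (by omega)]
    congr 1
    apply Fin.ext
    rw [Fin.val_natCast, Fin.val_natCast, Nat.mod_eq_of_lt (by omega), Nat.mod_eq_of_lt (by omega),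
      Nat.add_comm]
  dsimp only
  rw [h1, h2, h3]
  rfl
end bounds

lemma A_continuous {α H : ℝ} (hα0 : 0 < α) {A : Circ → Circ → ℝ}
    (hA : ∀ x y x' y', |A x y - A x' y'| ≤ H * (max (dist x x') (dist y y')) ^ α) :
    Continuous fun p : Circ × Circ => A p.1 p.2 := by
  rw [continuous_iff_continuousAt]
  intro q
  rw [ContinuousAt, tendsto_iff_dist_tendsto_zero]
  have hbound : ∀ p : Circ × Circ,
      dist (A p.1 p.2) (A q.1 q.2) ≤ |H| * (max (dist p.1 q.1) (dist p.2 q.2)) ^ α := by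
    intro p
    rw [Real.dist_eq]
    refine (hA p.1 p.2 q.1 q.2).trans ?_
    exact mul_le_mul_of_nonneg_right (le_abs_self H)
      (Real.rpow_nonneg (le_max_iff.mpr (Or.inl dist_nonneg)) α)
  have hg : Tendsto (fun p : Circ × Circ => |H| * (max (dist p.1 q.1) (dist p.2 q.2)) ^ α)
      (nhds q) (nhds 0) := by
    have hc : Tendsto (fun p : Circ × Circ => max (dist p.1 q.1) (dist p.2 q.2))
        (nhds q) (nhds 0) := by
      have : Continuous fun p : Circ × Circ => max (dist p.1 q.1) (dist p.2 q.2) :=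
        ((continuous_fst.dist continuous_const).max (continuous_snd.dist continuous_const))
      have h0 : max (dist q.1 q.1) (dist q.2 q.2) = 0 := by simp
      simpa [h0] using this.tendsto q
    have hrpow : Tendsto (fun t : ℝ => t ^ α) (nhds 0) (nhds 0) := by
      have := (Real.continuousAt_rpow_const 0 α (Or.inr hα0.le)).tendsto
      simpa [Real.zero_rpow hα0.ne'] using this
    have := (hrpow.comp hc).const_mul |H|
    simpa using this
  exact squeeze_zero (fun p => dist_nonneg) hbound hg

lemma kernel_norm {A : Circ → Circ → ℝ} (hAc : Continuous fun p : Circ × Circ => A p.1 p.2)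
    {lam : ℝ} (hlam : 0 < lam) {ψ : Circ → ℝ} (hψc : Continuous ψ) (hψpos : ∀ x, 0 < ψ x)
    (heig : ∀ y, ∫ x, Real.exp (A x y) * ψ x ∂haarC = lam * ψ y) (y : Circ) :
    ∫ x, Real.exp (Abar2 A ψ lam x y) ∂haarC = 1 := by
  have hfun : (fun x => Real.exp (Abar2 A ψ lam x y))
      = fun x => Real.exp (A x y) * ψ x / ψ y / lam := by
    funext x
    unfold Abar2
    rw [Real.exp_sub, Real.exp_sub, Real.exp_add, Real.exp_log (hψpos x), Real.exp_log (hψpos y),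
      Real.exp_log hlam]
  rw [hfun, integral_div, integral_div, heig y, mul_div_assoc, div_self (hψpos y).ne',
    mul_one, div_self hlam.ne']

/-- for a Hölder two-coordinate potential, the finite-volume DLR
expectations with right boundary condition `σ'` converge, as the volume grows,
to the expectation under the Gibbs state `m`; in particular the limit does not
depend on the boundary condition. (The volume is indexed by `N = n + r + 1`.) -/
theorem dlr_finite_volume_tendsto_gibbs (α H : ℝ) (hα0 : 0 < α) (hα1 : α ≤ 1)
    (A : Circ → Circ → ℝ)
    (hA : ∀ x y x' y', |A x y - A x' y'| ≤ H * (max (dist x x') (dist y y')) ^ α)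
    (lam : ℝ) (hlam : 0 < lam)
    (ψ : Circ → ℝ) (hψc : Continuous ψ) (hψpos : ∀ x, 0 < ψ x)
    (heig : ∀ y, ∫ x, Real.exp (A x y) * ψ x ∂haarC = lam * ψ y)
    (m : Measure Bs) (hm : IsProbabilityMeasure m)
    (hfix : FixedDual (fun x => Abar2 A ψ lam (x 0) (x 1)) m)
    (hmuniq : ∀ m' : Measure Bs, IsProbabilityMeasure m' →
      FixedDual (fun x => Abar2 A ψ lam (x 0) (x 1)) m' → m' = m)
    (r : ℕ) (f : (Fin (r + 1) → Circ) → ℝ) (hf : Continuous f) (σ' : Bs) :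
    Tendsto (fun n : ℕ =>
      ∫ τ : Fin (n + r + 1) → Circ,
        f (fun i => τ ((i : ℕ) : Fin (n + r + 1))) *
          Real.exp ((∑ k ∈ Finset.range (n + r),
            Abar2 A ψ lam (τ ((k : ℕ) : Fin (n + r + 1))) (τ ((k + 1 : ℕ) : Fin (n + r + 1))))
            + Abar2 A ψ lam (τ (((n + r : ℕ)) : Fin (n + r + 1))) (σ' (n + r + 1)))
        ∂(Measure.pi fun _ => haarC))
      atTop (𝓝 (∫ x, f (fun i => x (i : ℕ)) ∂m)) := by
  classical
  have hmI : IsProbabilityMeasure m := hm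
  set W : Circ → Circ → ℝ := Abar2 A ψ lam with hWdef
  have hAc : Continuous fun p : Circ × Circ => A p.1 p.2 := A_continuous hα0 hA
  have hlogψ : Continuous fun x : Circ => Real.log (ψ x) := by
    rw [continuous_iff_continuousAt]
    exact fun x => (Real.continuousAt_log (hψpos x).ne').comp hψc.continuousAt
  have hW : Continuous fun p : Circ × Circ => W p.1 p.2 := by
    have hrfl : (fun p : Circ × Circ => W p.1 p.2)
        = fun p : Circ × Circ =>
            A p.1 p.2 + Real.log (ψ p.1) - Real.log (ψ p.2) - Real.log lam := rfl
    rw [hrfl]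
    exact ((hAc.add (hlogψ.comp continuous_fst)).sub (hlogψ.comp continuous_snd)).sub
      continuous_const
  set k : Circ → Circ → ℝ := fun x y => Real.exp (W x y) with hkdef
  have hk : Continuous fun p : Circ × Circ => k p.1 p.2 := Real.continuous_exp.comp hW
  have hnorm : ∀ y, ∫ x, k x y ∂haarC = 1 := fun y => kernel_norm hAc hlam hψc hψpos heig y
  obtain ⟨pδ, hpδ⟩ := exists_min_cs hk
  have hδ0 : (0 : ℝ) < k pδ.1 pδ.2 := Real.exp_pos _
  set δ : ℝ := k pδ.1 pδ.2 with hδdef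
  have hδ : ∀ x y, δ ≤ k x y := fun x y => hpδ (x, y)
  have hδ1 : δ ≤ 1 := delta_le_one hk hδ0 hδ hnorm
  obtain ⟨y0, hCf⟩ := exists_max_cs hf.abs
  set Cf : ℝ := |f y0| with hCfdef
  obtain ⟨pW, hCW'⟩ := exists_max_cs hW.abs
  set CW : ℝ := |W pW.1 pW.2| with hCWdef
  have hCW : ∀ x y, |W x y| ≤ CW := fun x y => hCW' (x, y)
  have hFF0c : Continuous (FF r W f 0) := FF_zero_continuous hW hf hCf hCW
  obtain ⟨bm, hbm⟩ := exists_min_cs hFF0c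
  obtain ⟨bM, hbM⟩ := exists_max_cs hFF0c
  have hiter := Tk_iterate hk hδ0 hδ hnorm (FF r W f 0) hFF0c (FF r W f 0 bm) (FF r W f 0 bM)
    hbm hbM
  have hFFn : ∀ n, FF r W f n = (Tk k)^[n] (FF r W f 0) := by
    intro n
    induction n with
    | zero => rfl
    | succ n ih =>
      funext b
      rw [Function.iterate_succ_apply', ← ih, FF_succ hW hf n b]
      refine integral_congr_ae (Filter.Eventually.of_forall fun a => ?_)
      simp only [hkdef, Tk]
  have hFFc : ∀ n, Continuous (FF r W f n) := fun n => by rw [hFFn n]; exact (hiter n).1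
  set g : Bs → ℝ := fun y : Bs => f (fun i => y (i : ℕ)) with hgdef
  have hgc : Continuous g := hf.comp (continuous_pi fun i => continuous_apply ((i : ℕ)))
  have hchain : ∀ j, ∫ x, HH r W f j x ∂m = ∫ x, g x ∂m := by
    intro j
    induction j with
    | zero =>
      rw [← hfix g hgc ⟨Cf, fun y => hCf _⟩]
      exact (integral_congr_ae (Filter.Eventually.of_forall fun x => (Ruelle_g hW hf x))).symm
    | succ j ih =>
      rw [← ih, ← hfix (HH r W f j) (HH_continuous hW hf hCf hCW j)
        ⟨Cf * Real.exp (((j : ℝ) + 1) * CW), fun x => HH_bound hW hf hCf hCW j x⟩]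
      exact (integral_congr_ae (Filter.Eventually.of_forall fun x => (Ruelle_HH hW hf j x))).symm
  have hHr : ∀ x : Bs, HH r W f r x = FF r W f 0 (x 0) := by
    intro x
    show (∫ τ : Fin (r + 1) → Circ, HHint r W f r x τ ∂(Measure.pi fun _ => haarC))
        = ∫ τ : Fin (r + 0 + 1) → Circ, FFint r W f (r + 0) (x 0) τ ∂(Measure.pi fun _ => haarC)
    refine integral_congr_ae (Filter.Eventually.of_forall fun τ => ?_)
    have hmix : mixc r r τ x = fun i : Fin (r + 1) => τ ((i : ℕ) : Fin (r + 0 + 1)) := by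
      funext i
      unfold mixc
      rw [dif_pos i.isLt, fin_natCast_mk (show (i : ℕ) < r + 0 + 1 from i.isLt)]
    show HHint r W f r x τ = FFint r W f (r + 0) (x 0) τ
    unfold HHint FFint
    rw [hmix]
    rfl
  have hFFm : ∀ n, ∫ x, FF r W f n (x 0) ∂m = ∫ x, g x ∂m := by
    intro n
    induction n with
    | zero =>
      rw [← hchain r]
      exact integral_congr_ae (Filter.Eventually.of_forall fun x => (hHr x).symm)
    | succ n ih =>
      have hψc' : Continuous fun x : Bs => FF r W f n (x 0) :=
        (hFFc n).comp (continuous_apply 0)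
      have hbd : ∃ C, ∀ x : Bs, |FF r W f n (x 0)| ≤ C := by
        obtain ⟨bmx, hbmx⟩ := exists_max_cs (hFFc n).abs
        exact ⟨_, fun x => hbmx _⟩
      have hfx := hfix (fun x => FF r W f n (x 0)) hψc' hbd
      have hpt : ∀ x : Bs,
          Ruelle (fun y : Bs => W (y 0) (y 1)) (fun y : Bs => FF r W f n (y 0)) x
            = FF r W f (n + 1) (x 0) := by
        intro x
        rw [FF_succ hW hf n (x 0)]
        rfl
      rw [← ih, ← hfx]
      exact (integral_congr_ae (Filter.Eventually.of_forall fun x => (hpt x))).symm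
  have key : ∀ n (b : Circ),
      |FF r W f n b - ∫ x, g x ∂m| ≤ (1 - δ) ^ n * (FF r W f 0 bM - FF r W f 0 bm) := by
    intro n b
    obtain ⟨hcont, hbdd, mn, Mn, hmn, hosc⟩ := hiter n
    have hIb : mn ≤ FF r W f n b ∧ FF r W f n b ≤ Mn := by rw [hFFn n]; exact hmn b
    have hint : Integrable (fun x : Bs => FF r W f n (x 0)) m :=
      cont_integrable ((hFFc n).comp (continuous_apply 0))
    have hIm1 : mn ≤ ∫ x, FF r W f n (x 0) ∂m := by
      have := integral_mono (μ := m) (integrable_const mn) hint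
        (fun x => by rw [hFFn n]; exact (hmn (x 0)).1)
      simpa [measure_univ] using this
    have hIm2 : (∫ x, FF r W f n (x 0) ∂m) ≤ Mn := by
      have := integral_mono (μ := m) hint (integrable_const Mn)
        (fun x => by rw [hFFn n]; exact (hmn (x 0)).2)
      simpa [measure_univ] using this
    rw [← hFFm n, abs_le]
    constructor <;> linarith [hIb.1, hIb.2]
  refine Tendsto.congr (fun n => (FF_bridge n (σ' (n + r + 1))).symm) ?_
  rw [tendsto_iff_dist_tendsto_zero]
  have hgeo : Tendsto (fun n : ℕ => (1 - δ) ^ n * (FF r W f 0 bM - FF r W f 0 bm)) atTop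
      (𝓝 0) := by
    have := (tendsto_pow_atTop_nhds_zero_of_lt_one (show (0:ℝ) ≤ 1 - δ by linarith)
      (show (1:ℝ) - δ < 1 by linarith)).mul_const (FF r W f 0 bM - FF r W f 0 bm)
    simpa using this
  refine squeeze_zero (fun n => dist_nonneg) (fun n => ?_) hgeo
  rw [Real.dist_eq]
  exact key n _
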